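/- Let a = {a_n} be a positive non-increasing summable sequence with sum 1 and let D_a = { ∑_{i=k}^∞ a_i : k ∈ ℕ } ∪ {0}. Then for all θ ∈ [0,1], the upper θ-intermediate dimension of D_a equals θB/(1 − (1−θ)B), where B is the upper box-counting dimension of D_a. -/

import Mathlib

open Filter Set Topology

/-- Number of closed balls of radius `δ` needed to cover `F`. -/
noncomputable def coverNum (F : Set ℝ) (δ : ℝ) : ℕ :=
  sInf {n : ℕ | ∃ S : Finset ℝ, S.card = n ∧ F ⊆ ⋃ x ∈ S, Metric.closedBall x δ}

/-- Upper box-counting dimension. -/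
noncomputable def upperBoxDim (F : Set ℝ) : ℝ :=
  limsup (fun δ : ℝ => Real.log (coverNum F δ) / -Real.log δ) (nhdsWithin 0 (Set.Ioi 0))

/-- Lower box-counting dimension. -/
noncomputable def lowerBoxDim (F : Set ℝ) : ℝ :=
  liminf (fun δ : ℝ => Real.log (coverNum F δ) / -Real.log δ) (nhdsWithin 0 (Set.Ioi 0))

/-- Assouad dimension. -/
noncomputable def assouadDim (E : Set ℝ) : ℝ :=
  sInf {α : ℝ | ∃ c > (0:ℝ), ∃ ρ > (0:ℝ), ∀ x ∈ E, ∀ r R : ℝ, 0 < r → r < R → R < ρ →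
    (coverNum (Metric.ball x R ∩ E) r : ℝ) ≤ c * (R / r) ^ α}

/-- Lower (Assouad) dimension. -/
noncomputable def lowerAssouadDim (E : Set ℝ) : ℝ :=
  sSup {α : ℝ | ∃ c > (0:ℝ), ∃ ρ > (0:ℝ), ∀ x ∈ E, ∀ r R : ℝ, 0 < r → r < R → R < ρ →
    c * (R / r) ^ α ≤ (coverNum (Metric.ball x R ∩ E) r : ℝ)}

/-- Upper θ-intermediate dimension (with the convention that at θ = 0 it is the
Hausdorff dimension). -/
noncomputable def upperIntDim (θ : ℝ) (F : Set ℝ) : ℝ :=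
  if θ = 0 then (dimH F).toReal else
  sInf {s : ℝ | 0 ≤ s ∧ ∀ ε > (0:ℝ), ∃ δ₀ > (0:ℝ), ∀ δ : ℝ, 0 < δ → δ ≤ δ₀ →
    ∃ (I : Finset ℕ) (U : ℕ → Set ℝ), (F ⊆ ⋃ i ∈ I, U i) ∧
      (∀ i ∈ I, δ ^ (1 / θ) ≤ Metric.diam (U i) ∧ Metric.diam (U i) ≤ δ) ∧
      ∑ i ∈ I, Metric.diam (U i) ^ s ≤ ε}

/-- Lower θ-intermediate dimension (with the convention that at θ = 0 it is the
Hausdorff dimension). -/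
noncomputable def lowerIntDim (θ : ℝ) (F : Set ℝ) : ℝ :=
  if θ = 0 then (dimH F).toReal else
  sInf {s : ℝ | 0 ≤ s ∧ ∀ ε > (0:ℝ), ∀ δ₀ > (0:ℝ), ∃ δ : ℝ, 0 < δ ∧ δ ≤ δ₀ ∧
    ∃ (I : Finset ℕ) (U : ℕ → Set ℝ), (F ⊆ ⋃ i ∈ I, U i) ∧
      (∀ i ∈ I, δ ^ (1 / θ) ≤ Metric.diam (U i) ∧ Metric.diam (U i) ≤ δ) ∧
      ∑ i ∈ I, Metric.diam (U i) ^ s ≤ ε}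

/-- tails `x_n = ∑_{i=n}^∞ a_i` (the sequence `a` is indexed from 1;
the value `a 0` is irrelevant). -/
noncomputable def xseq (a : ℕ → ℝ) (n : ℕ) : ℝ := ∑' i : ℕ, a (n + i)

/-- `s_n = 2^{-n} x_{2^n}`. -/
noncomputable def sseq (a : ℕ → ℝ) (n : ℕ) : ℝ := xseq a (2 ^ n) / 2 ^ n

/-- `r_n = 2^{-n} ∑_{i=2^n}^{2^{n+1}-1} a_i`. -/
noncomputable def rseq (a : ℕ → ℝ) (n : ℕ) : ℝ :=
  (∑ i ∈ Finset.range (2 ^ n), a (2 ^ n + i)) / 2 ^ n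

/-- The countable complementary set `D_a = {x_k : k ≥ 1} ∪ {0}`. -/
noncomputable def Da (a : ℕ → ℝ) : Set ℝ := {0} ∪ {y : ℝ | ∃ k ≥ 1, y = xseq a k}

/-- Length of the interval corresponding to node `m` (in binary-tree indexing, root `1`)
in the construction of the decreasing Cantor set: the sum of the gaps in the subtree of `m`. -/
noncomputable def clen (a : ℕ → ℝ) (m : ℕ) : ℝ :=
  ∑' k : ℕ, ∑ i ∈ Finset.range (2 ^ k), a (2 ^ k * m + i)

/-- Left endpoint of the interval corresponding to node `m`. -/
noncomputable def lft (a : ℕ → ℝ) : ℕ → ℝ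
  | 0 => 0
  | 1 => 0
  | n + 2 =>
    if (n + 2) % 2 = 0 then lft a ((n + 2) / 2)
    else lft a ((n + 2) / 2) + clen a (n + 1) + a ((n + 2) / 2)
termination_by n => n
decreasing_by all_goals omega

/-- The closed interval corresponding to node `m`:  node `2^n + j - 1` is the
interval `I_{n,j}` of step `n`, for `1 ≤ j ≤ 2^n`. -/
noncomputable def node (a : ℕ → ℝ) (m : ℕ) : Set ℝ := Set.Icc (lft a m) (lft a m + clen a m)

/-- The decreasing Cantor set `C_a` associated with the sequence `a`. -/
noncomputable def cantorSetOf (a : ℕ → ℝ) : Set ℝ :=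
  ⋂ n : ℕ, ⋃ j ∈ Finset.Icc 1 (2 ^ n), node a (2 ^ n + j - 1)

/-- `E` is a complementary set of the sequence `a`: a closed subset of `[0,1]`
whose complement in `[0,1]` is a disjoint union of open intervals of lengths `a_1, a_2, …`. -/
def IsComplSet (a : ℕ → ℝ) (E : Set ℝ) : Prop :=
  ∃ g : ℕ → ℝ,
    (∀ n ≥ 1, Set.Ioo (g n) (g n + a n) ⊆ Set.Icc 0 1) ∧
    (∀ m ≥ 1, ∀ n ≥ 1, m ≠ n →
      Disjoint (Set.Ioo (g m) (g m + a m)) (Set.Ioo (g n) (g n + a n))) ∧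
    E = Set.Icc 0 1 \ ⋃ n ∈ {k : ℕ | 1 ≤ k}, Set.Ioo (g n) (g n + a n)

/-- `γ_{θ,a}(r) = max{ m : s_m ≥ s_r^{1/θ} }`. -/
noncomputable def gammaIdx (a : ℕ → ℝ) (θ : ℝ) (r : ℕ) : ℕ :=
  sSup {m : ℕ | sseq a r ^ (1 / θ) ≤ sseq a m}

section Basic

variable {a : ℕ → ℝ}

lemma summable_tail (hsumm : Summable fun n => a (n + 1)) {k : ℕ} (hk : 1 ≤ k) :
    Summable fun i => a (k + i) := by
  have h := (summable_nat_add_iff (f := fun n => a (n + 1)) (k - 1)).mpr hsumm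
  have he : (fun i => a (k + i)) = fun n => a (n + (k - 1) + 1) := by
    funext n; congr 1; omega
  rw [he]; exact h

lemma xseq_succ (hsumm : Summable fun n => a (n + 1)) {k : ℕ} (hk : 1 ≤ k) :
    xseq a k = a k + xseq a (k + 1) := by
  have hs := summable_tail hsumm hk
  have h0 := Summable.tsum_eq_zero_add hs
  rw [xseq, h0, Nat.add_zero]
  congr 1
  rw [xseq]; apply tsum_congr; intro i; congr 1; omega

lemma xseq_nonneg (hpos : ∀ n ≥ 1, 0 < a n) {k : ℕ} (hk : 1 ≤ k) : 0 ≤ xseq a k :=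
  tsum_nonneg fun i => (hpos _ (by omega)).le

lemma xseq_pos (hpos : ∀ n ≥ 1, 0 < a n) (hsumm : Summable fun n => a (n + 1))
    {k : ℕ} (hk : 1 ≤ k) : 0 < xseq a k := by
  rw [xseq_succ hsumm hk]
  have h1 := xseq_nonneg hpos (k := k + 1) (by omega)
  have h2 := hpos k hk
  linarith

lemma xseq_one (htot : ∑' n : ℕ, a (n + 1) = 1) : xseq a 1 = 1 := by
  rw [xseq, ← htot]
  apply tsum_congr; intro i; congr 1; omega

lemma xseq_anti (hpos : ∀ n ≥ 1, 0 < a n) (hsumm : Summable fun n => a (n + 1))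
    {j k : ℕ} (hj : 1 ≤ j) (hjk : j ≤ k) : xseq a k ≤ xseq a j := by
  induction k, hjk using Nat.le_induction with
  | base => exact le_rfl
  | succ n hn ih =>
      have h := xseq_succ hsumm (k := n) (by omega)
      have := hpos n (by omega)
      linarith

lemma xseq_lt (hpos : ∀ n ≥ 1, 0 < a n) (hsumm : Summable fun n => a (n + 1))
    {j k : ℕ} (hj : 1 ≤ j) (hjk : j < k) : xseq a k < xseq a j := by
  have h1 : xseq a k ≤ xseq a (j + 1) := xseq_anti hpos hsumm (by omega) hjk
  have h2 := xseq_succ hsumm hj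
  have := hpos j hj
  linarith

lemma xseq_le_one (hpos : ∀ n ≥ 1, 0 < a n) (hsumm : Summable fun n => a (n + 1))
    (htot : ∑' n : ℕ, a (n + 1) = 1) {k : ℕ} (hk : 1 ≤ k) : xseq a k ≤ 1 := by
  rw [← xseq_one htot]; exact xseq_anti hpos hsumm le_rfl hk

lemma a_le_of_le (hmono : ∀ n ≥ 1, a (n + 1) ≤ a n) {m k : ℕ} (hm : 1 ≤ m) (hmk : m ≤ k) :
    a k ≤ a m := by
  induction k, hmk using Nat.le_induction with
  | base => exact le_rfl
  | succ n hn ih => exact le_trans (hmono n (by omega)) ih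

lemma xseq_tendsto (hsumm : Summable fun n => a (n + 1)) :
    Tendsto (fun k => xseq a k) atTop (𝓝 0) := by
  have h := tendsto_sum_nat_add (f := fun n => a (n + 1))
  rw [← tendsto_add_atTop_iff_nat 1]
  convert h using 2 with i
  rw [xseq]
  apply tsum_congr; intro k; congr 1; omega

lemma zero_mem_Da : (0 : ℝ) ∈ Da a := Or.inl rfl

lemma xseq_mem_Da {k : ℕ} (hk : 1 ≤ k) : xseq a k ∈ Da a := Or.inr ⟨k, hk, rfl⟩

lemma Da_subset (hpos : ∀ n ≥ 1, 0 < a n) (hsumm : Summable fun n => a (n + 1))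
    (htot : ∑' n : ℕ, a (n + 1) = 1) : Da a ⊆ Icc 0 1 := by
  rintro y (rfl | ⟨k, hk, rfl⟩)
  · exact ⟨le_rfl, zero_le_one⟩
  · exact ⟨xseq_nonneg hpos hk, xseq_le_one hpos hsumm htot hk⟩

lemma Da_countable : (Da a).Countable := by
  apply Set.Countable.union (Set.countable_singleton 0)
  apply Set.Countable.mono ?_ (Set.countable_range (xseq a))
  rintro y ⟨k, _, rfl⟩; exact ⟨k, rfl⟩

end Basic

section Counting

lemma card_le_of_separated {Q : Finset ℝ} {σ u : ℝ} (hσ : 0 < σ) (hu : 0 ≤ u)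
    (hsep : ∀ p ∈ Q, ∀ q ∈ Q, p ≠ q → σ ≤ |p - q|)
    (hdiam : ∀ p ∈ Q, ∀ q ∈ Q, |p - q| ≤ u) :
    (Q.card : ℝ) ≤ u / σ + 1 := by
  rcases Q.eq_empty_or_nonempty with rfl | hne
  · simp; positivity
  set q0 := Q.min' hne with hq0def
  have hq0 : q0 ∈ Q := Q.min'_mem hne
  have hkey : ∀ p ∈ Q, ∀ q ∈ Q, p < q → ⌊(p - q0) / σ⌋₊ < ⌊(q - q0) / σ⌋₊ := by
    intro p hp q hq hpq
    have h1 : σ ≤ q - p := by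
      have := hsep p hp q hq (ne_of_lt hpq)
      rw [abs_sub_comm, abs_of_nonneg (by linarith)] at this
      linarith
    have hp0 : 0 ≤ (p - q0) / σ := by
      have := Q.min'_le p hp
      have : 0 ≤ p - q0 := by linarith
      positivity
    have hd : (1:ℝ) ≤ (q - p) / σ := (one_le_div hσ).2 h1
    have hi : (q - q0) / σ - (p - q0) / σ = (q - p) / σ := by ring
    have h2 : (p - q0) / σ + 1 ≤ (q - q0) / σ := by linarith
    calc ⌊(p - q0) / σ⌋₊ < ⌊(p - q0) / σ⌋₊ + 1 := Nat.lt_succ_self _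
    _ = ⌊(p - q0) / σ + 1⌋₊ := (Nat.floor_add_one hp0).symm
    _ ≤ ⌊(q - q0) / σ⌋₊ := Nat.floor_mono h2
  have hinj : Set.InjOn (fun p => ⌊(p - q0) / σ⌋₊) ↑Q := by
    intro p hp q hq hpq
    by_contra hne2
    rcases lt_or_gt_of_ne hne2 with h | h
    · exact absurd hpq (ne_of_lt (hkey p hp q hq h))
    · exact absurd hpq.symm (ne_of_lt (hkey q hq p hp h))
  have hmaps : ∀ p ∈ Q, ⌊(p - q0) / σ⌋₊ ∈ Finset.range (⌊u / σ⌋₊ + 1) := by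
    intro p hp
    rw [Finset.mem_range, Nat.lt_succ_iff]
    refine Nat.floor_mono ((div_le_div_iff_of_pos_right hσ).2 ?_)
    calc p - q0 ≤ |p - q0| := le_abs_self _
    _ ≤ u := hdiam p hp q0 hq0
  have hcard := Finset.card_le_card_of_injOn _ hmaps hinj
  rw [Finset.card_range] at hcard
  have h3 : (Q.card : ℝ) ≤ (⌊u / σ⌋₊ : ℝ) + 1 := by exact_mod_cast hcard
  have h4 : (⌊u / σ⌋₊ : ℝ) ≤ u / σ := Nat.floor_le (by positivity)
  linarith

end Counting

section CoverNum

lemma coverNum_le {F : Set ℝ} {δ : ℝ} (S : Finset ℝ)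
    (h : F ⊆ ⋃ x ∈ S, Metric.closedBall x δ) : coverNum F δ ≤ S.card :=
  Nat.sInf_le ⟨S, rfl, h⟩

lemma exists_cover {F : Set ℝ} (hF : F ⊆ Icc 0 1) {δ : ℝ} (hδ : 0 < δ) :
    ∃ S : Finset ℝ, S.card ≤ ⌊1 / (2 * δ)⌋₊ + 1 ∧ F ⊆ ⋃ x ∈ S, Metric.closedBall x δ := by
  refine ⟨(Finset.range (⌊1 / (2 * δ)⌋₊ + 1)).image (fun i : ℕ => (2 * (i:ℝ) + 1) * δ),
    le_trans Finset.card_image_le (by rw [Finset.card_range]), ?_⟩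
  intro y hy
  obtain ⟨hy0, hy1⟩ := hF hy
  set i := ⌊y / (2 * δ)⌋₊ with hidef
  have h2δ : (0:ℝ) < 2 * δ := by linarith
  have hyd : 0 ≤ y / (2 * δ) := by positivity
  have hl : (i : ℝ) * (2 * δ) ≤ y := (le_div_iff₀ h2δ).1 (Nat.floor_le hyd)
  have hr : y < ((i : ℝ) + 1) * (2 * δ) := by
    have h := Nat.lt_floor_add_one (y / (2 * δ))
    exact (div_lt_iff₀ h2δ).1 (by exact_mod_cast h)
  rw [mem_iUnion₂]
  refine ⟨(2 * (i:ℝ) + 1) * δ, ?_, ?_⟩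
  · rw [Finset.mem_image]
    refine ⟨i, ?_, rfl⟩
    rw [Finset.mem_range, Nat.lt_succ_iff]
    exact Nat.floor_mono (by gcongr)
  · rw [Metric.mem_closedBall, Real.dist_eq, abs_le]
    constructor <;> push_cast <;> nlinarith

lemma coverNum_le_explicit {F : Set ℝ} (hF : F ⊆ Icc 0 1) {δ : ℝ} (hδ : 0 < δ) :
    coverNum F δ ≤ ⌊1 / (2 * δ)⌋₊ + 1 := by
  obtain ⟨S, hcard, hcov⟩ := exists_cover hF hδ
  exact le_trans (coverNum_le S hcov) hcard

lemma exists_optimal_cover {F : Set ℝ} (hF : F ⊆ Icc 0 1) {δ : ℝ} (hδ : 0 < δ) :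
    ∃ S : Finset ℝ, S.card = coverNum F δ ∧ F ⊆ ⋃ x ∈ S, Metric.closedBall x δ := by
  obtain ⟨S, _, hcov⟩ := exists_cover hF hδ
  obtain ⟨T, hT, hTcov⟩ := Nat.sInf_mem (⟨S.card, S, rfl, hcov⟩ :
    Set.Nonempty {n : ℕ | ∃ S : Finset ℝ, S.card = n ∧ F ⊆ ⋃ x ∈ S, Metric.closedBall x δ})
  exact ⟨T, hT, hTcov⟩

lemma one_le_coverNum {F : Set ℝ} (hF : F ⊆ Icc 0 1) (hne : F.Nonempty) {δ : ℝ} (hδ : 0 < δ) :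
    1 ≤ coverNum F δ := by
  obtain ⟨S, hcard, hcov⟩ := exists_optimal_cover hF hδ
  rcases Nat.eq_zero_or_pos (coverNum F δ) with h0 | h
  · exfalso
    rw [h0, Finset.card_eq_zero] at hcard
    obtain ⟨y, hy⟩ := hne
    have := hcov hy
    simp [hcard] at this
  · exact h

lemma exists_separated {F : Set ℝ} (hF : F ⊆ Icc 0 1) {σ : ℝ} (hσ : 0 < σ) :
    ∃ P : Finset ℝ, ↑P ⊆ F ∧ (∀ p ∈ P, ∀ q ∈ P, p ≠ q → σ ≤ |p - q|) ∧
      coverNum F σ ≤ P.card := by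
  set C := {c : ℕ | ∃ P : Finset ℝ, ↑P ⊆ F ∧ (∀ p ∈ P, ∀ q ∈ P, p ≠ q → σ ≤ |p - q|) ∧
    P.card = c} with hCdef
  have hC0 : 0 ∈ C := ⟨∅, by simp, by simp, rfl⟩
  have hbdd : BddAbove C := by
    refine ⟨⌊1 / σ + 1⌋₊, ?_⟩
    rintro c ⟨P, hPF, hsep, rfl⟩
    have hcr : (P.card : ℝ) ≤ 1 / σ + 1 := by
      apply card_le_of_separated hσ zero_le_one hsep
      intro p hp q hq
      have h1 := hF (hPF hp); have h2 := hF (hPF hq)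
      rw [abs_le]
      constructor <;> [linarith [h1.1, h2.2]; linarith [h1.2, h2.1]]
    exact Nat.le_floor hcr
  obtain ⟨P, hPF, hsep, hcard⟩ := Nat.sSup_mem ⟨0, hC0⟩ hbdd
  refine ⟨P, hPF, hsep, ?_⟩
  apply coverNum_le
  intro y hy
  by_contra hcov
  rw [mem_iUnion₂] at hcov
  push_neg at hcov
  have hysep : ∀ p ∈ P, σ ≤ |y - p| := by
    intro p hp
    have := hcov p hp
    rw [Metric.mem_closedBall, Real.dist_eq] at this
    linarith [not_le.mp this]
  have hyP : y ∉ P := by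
    intro h
    have := hysep y h
    simp at this
    linarith
  have hmem : P.card + 1 ∈ C := by
    refine ⟨insert y P, ?_, ?_, ?_⟩
    · rw [Finset.coe_insert]
      exact Set.insert_subset hy hPF
    · intro p hp q hq hpq
      rcases Finset.mem_insert.mp hp with rfl | hp' <;>
        rcases Finset.mem_insert.mp hq with rfl | hq'
      · exact absurd rfl hpq
      · exact hysep q hq'
      · rw [abs_sub_comm]; exact hysep p hp'
      · exact hsep p hp' q hq' hpq
    · rw [Finset.card_insert_of_notMem hyP]
  have := le_csSup hbdd hmem
  rw [hcard] at this
  omega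

end CoverNum

section Structure

variable {a : ℕ → ℝ}

lemma interval_le_of_cover {L ρ : ℝ} (hL : 0 ≤ L) (hρ : 0 < ρ) (S : Finset ℝ)
    (h : ∀ y ∈ Icc (0:ℝ) L, ∃ c ∈ S, |y - c| ≤ 3 * ρ) : L ≤ S.card * (6 * ρ) := by
  have hsub : Icc (0:ℝ) L ⊆ ⋃ c ∈ S, Metric.closedBall c (3 * ρ) := by
    intro y hy
    obtain ⟨c, hc, hd⟩ := h y hy
    rw [mem_iUnion₂]
    exact ⟨c, hc, by rwa [Metric.mem_closedBall, Real.dist_eq]⟩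
  have h1 := MeasureTheory.measure_mono (μ := MeasureTheory.volume) hsub
  have h2 : MeasureTheory.volume (⋃ c ∈ S, Metric.closedBall c (3 * ρ)) ≤
      S.card * ENNReal.ofReal (6 * ρ) := by
    refine le_trans (MeasureTheory.measure_biUnion_finset_le S _) ?_
    have heq : ∀ c ∈ S, MeasureTheory.volume (Metric.closedBall c (3 * ρ)) =
        ENNReal.ofReal (6 * ρ) := by
      intro c _
      rw [Real.volume_closedBall]
      congr 1
      ring
    rw [Finset.sum_congr rfl heq, Finset.sum_const, nsmul_eq_mul]
  rw [Real.volume_Icc, sub_zero] at h1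
  have h3 : ENNReal.ofReal L ≤ ENNReal.ofReal ((S.card : ℝ) * (6 * ρ)) := by
    rw [ENNReal.ofReal_mul (Nat.cast_nonneg _), ENNReal.ofReal_natCast]
    exact le_trans h1 h2
  rwa [ENNReal.ofReal_le_ofReal_iff (by positivity)] at h3

lemma dense_tail (hpos : ∀ n ≥ 1, 0 < a n) (hsumm : Summable fun n => a (n + 1))
    {n : ℕ} {ρ : ℝ} (hρ : 0 < ρ) (hgap : ∀ k, n < k → a k ≤ 2 * ρ) :
    ∀ y ∈ Icc (0:ℝ) (xseq a (n + 1)), ∃ z ∈ Da a, |y - z| ≤ 2 * ρ := by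
  intro y hy
  set K := {k : ℕ | n + 1 ≤ k ∧ xseq a k ≤ y} with hKdef
  by_cases hne : K.Nonempty
  · set k0 := sInf K with hk0def
    obtain ⟨hk0n, hk0y⟩ := Nat.sInf_mem hne
    by_cases h1 : k0 = n + 1
    · refine ⟨xseq a (n + 1), xseq_mem_Da (by omega), ?_⟩
      have : y = xseq a (n + 1) := le_antisymm hy.2 (h1 ▸ hk0y)
      rw [this, sub_self, abs_zero]
      positivity
    · have hk1 : n + 1 ≤ k0 - 1 := by omega
      have hk0pred : k0 - 1 ∉ K := Nat.notMem_of_lt_sInf (by omega)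
      have hgt : y < xseq a (k0 - 1) := by
        by_contra hle
        exact hk0pred ⟨hk1, by linarith [not_lt.mp hle]⟩
      have hsucc : xseq a (k0 - 1) = a (k0 - 1) + xseq a k0 := by
        have := xseq_succ hsumm (k := k0 - 1) (by omega)
        rwa [Nat.sub_add_cancel (by omega)] at this
      refine ⟨xseq a k0, xseq_mem_Da (by omega), ?_⟩
      have hga : a (k0 - 1) ≤ 2 * ρ := hgap _ (by omega)
      rw [abs_of_nonneg (by linarith)]
      linarith
  · refine ⟨0, zero_mem_Da, ?_⟩
    have hlt : ∀ k, n + 1 ≤ k → y < xseq a k := by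
      intro k hk
      by_contra hle
      exact hne ⟨k, hk, not_lt.mp hle⟩
    have hy0 : y ≤ 0 := by
      refine ge_of_tendsto (xseq_tendsto hsumm) ?_
      filter_upwards [eventually_ge_atTop (n + 1)] with k hk
      exact (hlt k hk).le
    have : y = 0 := le_antisymm hy0 hy.1
    rw [this, sub_zero, abs_zero]
    positivity

lemma sep_points_le_cover (hpos : ∀ n ≥ 1, 0 < a n) (hsumm : Summable fun n => a (n + 1))
    {S : Finset ℝ} {ρ : ℝ} (hρ : 0 < ρ) {n : ℕ}
    (hbig : ∀ k, 1 ≤ k → k ≤ n → 2 * ρ < a k)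
    (hcov : Da a ⊆ ⋃ c ∈ S, Metric.closedBall c ρ) : n ≤ S.card := by
  have hchoice : ∀ k : ℕ, ∃ c : ℝ, 1 ≤ k ∧ k ≤ n → c ∈ S ∧ |xseq a k - c| ≤ ρ := by
    intro k
    by_cases hk : 1 ≤ k ∧ k ≤ n
    · have := hcov (xseq_mem_Da (a := a) hk.1)
      rw [mem_iUnion₂] at this
      obtain ⟨c, hc, hd⟩ := this
      rw [Metric.mem_closedBall, Real.dist_eq] at hd
      exact ⟨c, fun _ => ⟨hc, hd⟩⟩
    · exact ⟨0, fun h => absurd h hk⟩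
  choose f hf using hchoice
  have hkey : ∀ j k, 1 ≤ j → j < k → k ≤ n → False → True := fun _ _ _ _ _ _ => trivial
  have hsep : ∀ j k, 1 ≤ j → j < k → k ≤ n → f j ≠ f k := by
    intro j k hj hjk hkn hne
    obtain ⟨hfS_j, hfd_j⟩ := hf j ⟨hj, by omega⟩
    obtain ⟨hfS_k, hfd_k⟩ := hf k ⟨by omega, hkn⟩
    have hx : xseq a j - xseq a k > 2 * ρ := by
      have h1 : xseq a k ≤ xseq a (j + 1) := xseq_anti hpos hsumm (by omega) hjk
      have h2 := xseq_succ hsumm hj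
      have h3 := hbig j hj (by omega)
      linarith
    rw [← hne] at hfd_k
    have := abs_sub_abs_le_abs_sub (xseq a j - f j) (xseq a k - f j)
    have habs : |xseq a j - xseq a k| ≤ 2 * ρ := by
      have := abs_sub (xseq a j - f j) (xseq a k - f j)
      calc |xseq a j - xseq a k| = |(xseq a j - f j) - (xseq a k - f j)| := by ring_nf
      _ ≤ |xseq a j - f j| + |xseq a k - f j| := abs_sub _ _
      _ ≤ 2 * ρ := by linarith
    rw [abs_of_nonneg (by linarith)] at habs
    linarith
  have hinj : Set.InjOn f ↑(Finset.Icc 1 n) := by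
    intro j hj k hk hfjk
    rw [Finset.coe_Icc, Set.mem_Icc] at hj hk
    by_contra hne
    rcases lt_or_gt_of_ne hne with h | h
    · exact hsep j k hj.1 h hk.2 hfjk
    · exact hsep k j hk.1 h hj.2 hfjk.symm
  have hmaps : ∀ k ∈ Finset.Icc 1 n, f k ∈ S := by
    intro k hk
    rw [Finset.mem_Icc] at hk
    exact (hf k hk).1
  have := Finset.card_le_card_of_injOn f hmaps hinj
  rwa [Nat.card_Icc, Nat.add_sub_cancel] at this

end Structure

section FilterLemmas

variable {a : ℕ → ℝ}

lemma ev_basic : ∀ᶠ δ in 𝓝[>](0:ℝ), 0 < δ ∧ δ ≤ 1/2 := by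
  have h : Ioc (0:ℝ) (1/2) ∈ 𝓝[>](0:ℝ) := Ioc_mem_nhdsGT (by norm_num)
  filter_upwards [h] with δ hδ
  exact ⟨hδ.1, hδ.2⟩

lemma N_le_rpow {F : Set ℝ} (hF : F ⊆ Icc 0 1) {δ u : ℝ} (h0 : 0 < δ) (hhalf : δ ≤ 1/2)
    (hu : 1 ≤ u) : (coverNum F δ : ℝ) ≤ δ ^ (-u) := by
  have h1 : (coverNum F δ : ℝ) ≤ 1/(2*δ) + 1 := by
    have hc := coverNum_le_explicit hF h0
    calc (coverNum F δ : ℝ) ≤ ((⌊1/(2*δ)⌋₊ + 1 : ℕ) : ℝ) := by exact_mod_cast hc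
    _ ≤ 1/(2*δ) + 1 := by push_cast; have := Nat.floor_le (a := 1/(2*δ)) (by positivity); linarith
  have h2 : 1/(2*δ) + 1 ≤ 1/δ := by
    have ha : (1:ℝ) ≤ 1/(2*δ) := by rw [le_one_div (by linarith) (by linarith)]; linarith
    have hδne : δ ≠ 0 := ne_of_gt h0
    have hb : 1/(2*δ) + 1/(2*δ) = 1/δ := by
      field_simp
      norm_num
    linarith
  have h3 : 1/δ = δ ^ (-1:ℝ) := by rw [Real.rpow_neg_one, one_div]
  have h4 : δ ^ (-1:ℝ) ≤ δ ^ (-u) :=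
    Real.rpow_le_rpow_of_exponent_ge h0 (by linarith) (by linarith)
  linarith

lemma ev_N_le_rpow {F : Set ℝ} (hF : F ⊆ Icc 0 1) {u : ℝ} (hu : 1 ≤ u) :
    ∀ᶠ δ in 𝓝[>](0:ℝ), (coverNum F δ : ℝ) ≤ δ ^ (-u) := by
  filter_upwards [ev_basic] with δ hδ
  exact N_le_rpow hF hδ.1 hδ.2 hu

lemma ev_f_le {F : Set ℝ} (hF : F ⊆ Icc 0 1) (hne : F.Nonempty) {u : ℝ} (hu : 1 ≤ u) :
    ∀ᶠ δ in 𝓝[>](0:ℝ), Real.log (coverNum F δ) / -Real.log δ ≤ u := by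
  filter_upwards [ev_basic, ev_N_le_rpow hF hu] with δ hδ hN
  obtain ⟨h0, hhalf⟩ := hδ
  have hδ1 : δ < 1 := lt_of_le_of_lt hhalf (by norm_num)
  have hlog : 0 < -Real.log δ := by rw [neg_pos]; exact Real.log_neg h0 hδ1
  have hN1 : (1:ℝ) ≤ (coverNum F δ : ℝ) := by
    exact_mod_cast one_le_coverNum hF hne h0
  rw [div_le_iff₀ hlog]
  have hle : Real.log (coverNum F δ) ≤ Real.log (δ ^ (-u)) :=
    (Real.log_le_log_iff (by linarith) (Real.rpow_pos_of_pos h0 _)).2 hN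
  rw [Real.log_rpow h0] at hle
  linarith

lemma ev_f_nonneg {F : Set ℝ} (hF : F ⊆ Icc 0 1) (hne : F.Nonempty) :
    ∀ᶠ δ in 𝓝[>](0:ℝ), 0 ≤ Real.log (coverNum F δ) / -Real.log δ := by
  filter_upwards [ev_basic] with δ hδ
  obtain ⟨h0, hhalf⟩ := hδ
  have hδ1 : δ < 1 := lt_of_le_of_lt hhalf (by norm_num)
  have hlog : 0 < -Real.log δ := by rw [neg_pos]; exact Real.log_neg h0 hδ1
  have hN1 : (1:ℝ) ≤ (coverNum F δ : ℝ) := by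
    exact_mod_cast one_le_coverNum hF hne h0
  have : 0 ≤ Real.log (coverNum F δ) := Real.log_nonneg hN1
  positivity

lemma upperBoxDim_le_one {F : Set ℝ} (hF : F ⊆ Icc 0 1) (hne : F.Nonempty) :
    upperBoxDim F ≤ 1 :=
  limsup_le_of_le (isCoboundedUnder_le_of_eventually_le _ (ev_f_nonneg hF hne))
    (ev_f_le hF hne le_rfl)

lemma upperBoxDim_nonneg {F : Set ℝ} (hF : F ⊆ Icc 0 1) (hne : F.Nonempty) :
    0 ≤ upperBoxDim F :=
  le_limsup_of_frequently_le (ev_f_nonneg hF hne).frequently ⟨1, ev_f_le hF hne le_rfl⟩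

lemma ev_N_le_of_lt {F : Set ℝ} (hF : F ⊆ Icc 0 1) (hne : F.Nonempty) {t : ℝ}
    (ht : upperBoxDim F < t) :
    ∀ᶠ δ in 𝓝[>](0:ℝ), (coverNum F δ : ℝ) ≤ δ ^ (-t) := by
  have hev := eventually_lt_of_limsup_lt ht ⟨1, ev_f_le hF hne le_rfl⟩
  filter_upwards [ev_basic, hev] with δ hδ hf
  obtain ⟨h0, hhalf⟩ := hδ
  have hδ1 : δ < 1 := lt_of_le_of_lt hhalf (by norm_num)
  have hlog : 0 < -Real.log δ := by rw [neg_pos]; exact Real.log_neg h0 hδ1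
  have hN1 : (1:ℝ) ≤ (coverNum F δ : ℝ) := by
    exact_mod_cast one_le_coverNum hF hne h0
  rw [div_lt_iff₀ hlog] at hf
  calc (coverNum F δ : ℝ) = Real.exp (Real.log (coverNum F δ)) :=
        (Real.exp_log (by linarith)).symm
  _ ≤ Real.exp (-t * Real.log δ) := Real.exp_le_exp.2 (by linarith)
  _ = δ ^ (-t) := by rw [Real.rpow_def_of_pos h0]; ring_nf

lemma freq_N_ge_of_lt {F : Set ℝ} (hF : F ⊆ Icc 0 1) (hne : F.Nonempty) {t : ℝ}
    (ht : t < upperBoxDim F) :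
    ∀ c > (0:ℝ), ∃ δ, 0 < δ ∧ δ ≤ c ∧ δ ^ (-t) ≤ (coverNum F δ : ℝ) := by
  intro c hc
  have hfreq : ∃ᶠ δ in 𝓝[>](0:ℝ), t < Real.log (coverNum F δ) / -Real.log δ :=
    frequently_lt_of_lt_limsup (isCoboundedUnder_le_of_eventually_le _ (ev_f_nonneg hF hne)) ht
  have hfreq2 := hfreq.and_eventually ev_basic
  rw [Filter.frequently_iff] at hfreq2
  obtain ⟨δ, hδmem, hf, h0, hhalf⟩ := hfreq2 (Ioc_mem_nhdsGT hc)
  refine ⟨δ, h0, hδmem.2, ?_⟩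
  have hδ1 : δ < 1 := lt_of_le_of_lt hhalf (by norm_num)
  have hlog : 0 < -Real.log δ := by rw [neg_pos]; exact Real.log_neg h0 hδ1
  have hN1 : (1:ℝ) ≤ (coverNum F δ : ℝ) := by
    exact_mod_cast one_le_coverNum hF hne h0
  rw [lt_div_iff₀ hlog] at hf
  calc δ ^ (-t) = Real.exp (-t * Real.log δ) := by rw [Real.rpow_def_of_pos h0]; ring_nf
  _ ≤ Real.exp (Real.log (coverNum F δ)) := Real.exp_le_exp.2 (by linarith)
  _ = (coverNum F δ : ℝ) := Real.exp_log (by linarith)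

end FilterLemmas

section UP

variable {a : ℕ → ℝ}

lemma mem_coverSet (hpos : ∀ n ≥ 1, 0 < a n) (hmono : ∀ n ≥ 1, a (n + 1) ≤ a n)
    (hsumm : Summable fun n => a (n + 1)) (htot : ∑' n : ℕ, a (n + 1) = 1)
    {θ s t β : ℝ} (hθ0 : 0 < θ) (hθ1 : θ ≤ 1) (hs : 0 < s) (hβ : 0 < β)
    (he1 : 0 < β * (1 - t) + s - 1) (he2 : 0 < s / θ - β * t)
    (Hev : ∀ᶠ ρ in 𝓝[>](0:ℝ), (coverNum (Da a) ρ : ℝ) ≤ ρ ^ (-t)) :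
    0 ≤ s ∧ ∀ ε > (0:ℝ), ∃ δ₀ > (0:ℝ), ∀ δ : ℝ, 0 < δ → δ ≤ δ₀ →
      ∃ (I : Finset ℕ) (U : ℕ → Set ℝ), (Da a ⊆ ⋃ i ∈ I, U i) ∧
        (∀ i ∈ I, δ ^ (1 / θ) ≤ Metric.diam (U i) ∧ Metric.diam (U i) ≤ δ) ∧
        ∑ i ∈ I, Metric.diam (U i) ^ s ≤ ε := by
  have hF := Da_subset hpos hsumm htot
  refine ⟨hs.le, ?_⟩
  intro ε hε
  rw [Filter.eventually_iff, mem_nhdsGT_iff_exists_Ioc_subset] at Hev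
  obtain ⟨c, hc, hsubc⟩ := Hev
  have hc0 : (0:ℝ) < c := hc
  set e1 := β * (1 - t) + s - 1 with he1def
  set e2 := s / θ - β * t with he2def
  set δ₀ := min (min (1/2) (c ^ (1/β)))
      (min ((ε/18) ^ (1/e1)) (min ((ε/3) ^ (1/s)) ((ε/3) ^ (1/e2)))) with hδ₀def
  have hδ₀pos : 0 < δ₀ := by
    apply lt_min (lt_min (by norm_num) (Real.rpow_pos_of_pos hc0 _))
    exact lt_min (Real.rpow_pos_of_pos (by positivity) _)
      (lt_min (Real.rpow_pos_of_pos (by positivity) _) (Real.rpow_pos_of_pos (by positivity) _))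
  refine ⟨δ₀, hδ₀pos, ?_⟩
  intro δ hδ hδle
  have hδhalf : δ ≤ 1/2 := le_trans hδle (le_trans (min_le_left _ _) (min_le_left _ _))
  have hδ1 : δ < 1 := by linarith
  have hδc : δ ≤ c ^ (1/β) := le_trans hδle (le_trans (min_le_left _ _) (min_le_right _ _))
  have hδA : δ ≤ (ε/18) ^ (1/e1) :=
    le_trans hδle (le_trans (min_le_right _ _) (min_le_left _ _))
  have hδB : δ ≤ (ε/3) ^ (1/s) :=
    le_trans hδle (le_trans (min_le_right _ _) (le_trans (min_le_right _ _) (min_le_left _ _)))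
  have hδC : δ ≤ (ε/3) ^ (1/e2) :=
    le_trans hδle (le_trans (min_le_right _ _) (le_trans (min_le_right _ _) (min_le_right _ _)))
  set ρ := δ ^ β with hρdef
  have hρ0 : 0 < ρ := Real.rpow_pos_of_pos hδ _
  have hρc : ρ ≤ c := by
    calc ρ ≤ (c ^ (1/β)) ^ β := Real.rpow_le_rpow hδ.le hδc hβ.le
    _ = c := by rw [← Real.rpow_mul hc0.le, one_div, inv_mul_cancel₀ (ne_of_gt hβ), Real.rpow_one]
  have hN : (coverNum (Da a) ρ : ℝ) ≤ ρ ^ (-t) := hsubc ⟨hρ0, hρc⟩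
  obtain ⟨S₀, hS₀card, hS₀cov⟩ := exists_optimal_cover hF hρ0
  have hNρ : (S₀.card : ℝ) ≤ ρ ^ (-t) := by rw [hS₀card]; exact hN
  -- the threshold n
  have htend := hsumm.tendsto_atTop_zero
  have hev2 : ∀ᶠ k in atTop, a (k + 1) < 2 * ρ := htend.eventually_lt_const (by positivity)
  rw [eventually_atTop] at hev2
  obtain ⟨K, hK⟩ := hev2
  set A := {k : ℕ | 1 ≤ k ∧ 2 * ρ < a k} with hAdef
  have hAbdd : BddAbove A := by
    refine ⟨K + 1, ?_⟩
    rintro k ⟨hk1, hk2⟩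
    by_contra hgt
    push_neg at hgt
    have := hK (k - 1) (by omega)
    rw [Nat.sub_add_cancel (by omega)] at this
    linarith
  set n := sSup A with hndef
  have hgap : ∀ k, n < k → a k ≤ 2 * ρ := by
    intro k hk
    by_contra hgt
    push_neg at hgt
    have hk1 : 1 ≤ k := by omega
    have := le_csSup hAbdd (show k ∈ A from ⟨hk1, hgt⟩)
    omega
  have hbig : ∀ k, 1 ≤ k → k ≤ n → 2 * ρ < a k := by
    intro k hk1 hkn
    by_cases hAne : A.Nonempty
    · obtain ⟨hn1, hn2⟩ := Nat.sSup_mem hAne hAbdd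
      exact lt_of_lt_of_le hn2 (a_le_of_le hmono hk1 hkn)
    · exfalso
      rw [Set.not_nonempty_iff_eq_empty] at hAne
      rw [hndef, hAne, csSup_empty] at hkn
      simp at hkn
      omega
  have hn_le_N : n ≤ S₀.card := sep_points_le_cover hpos hsumm hρ0 hbig hS₀cov
  set X := xseq a (n + 1) with hXdef
  have hX0 : 0 ≤ X := xseq_nonneg hpos (by omega)
  have hXle : X ≤ S₀.card * (6 * ρ) := by
    apply interval_le_of_cover hX0 hρ0
    intro y hy
    obtain ⟨z, hzD, hzd⟩ := dense_tail hpos hsumm hρ0 hgap y hy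
    have hz := hS₀cov hzD
    rw [mem_iUnion₂] at hz
    obtain ⟨cc, hcc, hcd⟩ := hz
    rw [Metric.mem_closedBall, Real.dist_eq] at hcd
    refine ⟨cc, hcc, ?_⟩
    calc |y - cc| ≤ |y - z| + |z - cc| := abs_sub_le _ _ _
    _ ≤ 2 * ρ + ρ := add_le_add hzd hcd
    _ ≤ 3 * ρ := by linarith
  set m := ⌊X / δ⌋₊ + 1 with hmdef
  set η := δ ^ (1/θ) with hηdef
  have hη0 : 0 < η := Real.rpow_pos_of_pos hδ _
  have hθinv : (1:ℝ) ≤ 1/θ := by rw [le_div_iff₀ hθ0]; linarith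
  have hηδ : η ≤ δ := by
    have h := Real.rpow_le_rpow_of_exponent_ge hδ hδ1.le hθinv
    rwa [Real.rpow_one] at h
  have hcover_dense : ∀ z : ℝ, 0 ≤ z → z ≤ X →
      ∃ i : ℕ, i < m ∧ (i:ℝ) * δ ≤ z ∧ z ≤ (i:ℝ) * δ + δ := by
    intro z hz0 hzX
    refine ⟨⌊z / δ⌋₊, ?_, ?_, ?_⟩
    · have : ⌊z / δ⌋₊ ≤ ⌊X / δ⌋₊ := Nat.floor_mono (by gcongr)
      omega
    · exact (le_div_iff₀ hδ).1 (Nat.floor_le (by positivity))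
    · have h1 := Nat.lt_floor_add_one (z / δ)
      have h2 : z < ((⌊z / δ⌋₊ : ℝ) + 1) * δ := (div_lt_iff₀ hδ).1 (by exact_mod_cast h1)
      nlinarith
  refine ⟨Finset.range (m + n), fun i =>
    if i < m then Icc ((i:ℝ) * δ) ((i:ℝ) * δ + δ)
    else Icc (xseq a (i - m + 1)) (xseq a (i - m + 1) + η), ?_, ?_, ?_⟩
  · rintro z hz
    rw [mem_iUnion₂]
    have hzcase : (∃ k, 1 ≤ k ∧ k ≤ n ∧ z = xseq a k) ∨ (0 ≤ z ∧ z ≤ X) := by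
      rcases hz with rfl | ⟨k, hk1, rfl⟩
      · exact Or.inr ⟨le_rfl, hX0⟩
      · rcases le_or_gt k n with hkn | hkn
        · exact Or.inl ⟨k, hk1, hkn, rfl⟩
        · refine Or.inr ⟨xseq_nonneg hpos hk1, ?_⟩
          exact xseq_anti hpos hsumm (by omega) (by omega)
    rcases hzcase with ⟨k, hk1, hkn, rfl⟩ | ⟨hz0, hzX⟩
    · refine ⟨m + (k - 1), ?_, ?_⟩
      · rw [Finset.mem_range]; omega
      · have hnotlt : ¬ (m + (k - 1) < m) := by omega
        simp only [hnotlt, if_false]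
        have hidx : m + (k - 1) - m + 1 = k := by omega
        rw [hidx]
        exact ⟨le_rfl, by linarith⟩
    · obtain ⟨i, him, hil, hir⟩ := hcover_dense z hz0 hzX
      refine ⟨i, ?_, ?_⟩
      · rw [Finset.mem_range]; omega
      · simp only [him, if_true]
        exact ⟨hil, hir⟩
  · intro i hi
    by_cases him : i < m
    · simp only [him, if_true]
      have hd : Metric.diam (Icc ((i:ℝ) * δ) ((i:ℝ) * δ + δ)) = δ := by
        rw [Real.diam_Icc (by linarith)]; ring
      rw [hd]
      exact ⟨hηδ, le_rfl⟩
    · simp only [him, if_false]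
      have hd : Metric.diam (Icc (xseq a (i - m + 1)) (xseq a (i - m + 1) + η)) = η := by
        rw [Real.diam_Icc (by linarith)]; ring
      rw [hd]
      exact ⟨le_rfl, hηδ⟩
  · -- the sum
    have hsum_eq : ∑ i ∈ Finset.range (m + n),
        Metric.diam (if i < m then Icc ((i:ℝ) * δ) ((i:ℝ) * δ + δ)
          else Icc (xseq a (i - m + 1)) (xseq a (i - m + 1) + η)) ^ s
        = (m:ℝ) * δ ^ s + (n:ℝ) * η ^ s := by
      rw [Finset.sum_range_add]
      congr 1
      · rw [Finset.sum_congr rfl (g := fun _ => δ ^ s) ?_, Finset.sum_const,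
          Finset.card_range, nsmul_eq_mul]
        intro i hii
        rw [Finset.mem_range] at hii
        simp only [hii, if_true]
        rw [Real.diam_Icc (by linarith)]
        congr 1; ring
      · rw [Finset.sum_congr rfl (g := fun _ => η ^ s) ?_, Finset.sum_const,
          Finset.card_range, nsmul_eq_mul]
        intro j hjj
        have : ¬ (m + j < m) := by omega
        simp only [this, if_false]
        rw [Real.diam_Icc (by linarith)]
        congr 1; ring
    rw [hsum_eq]
    -- numeric bounds
    have id1 : ρ ^ (1 - t) = δ ^ (β * (1 - t)) := by rw [hρdef, ← Real.rpow_mul hδ.le]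
    have id2 : ρ ^ (-t) = δ ^ (-(β * t)) := by
      rw [hρdef, ← Real.rpow_mul hδ.le]; congr 1; ring
    have id5 : η ^ s = δ ^ ((1/θ) * s) := by rw [hηdef, ← Real.rpow_mul hδ.le]
    have hpow1 : δ ^ s / δ = δ ^ (s - 1) := by
      rw [Real.rpow_sub hδ, Real.rpow_one]
    have hm_le : (m:ℝ) ≤ X / δ + 1 := by
      rw [hmdef]
      push_cast
      have := Nat.floor_le (a := X / δ) (by positivity)
      linarith
    have hXbound : X ≤ 6 * ρ ^ (1 - t) := by
      calc X ≤ (S₀.card : ℝ) * (6 * ρ) := hXle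
      _ ≤ ρ ^ (-t) * (6 * ρ) := by
          apply mul_le_mul_of_nonneg_right hNρ (by positivity)
      _ = 6 * (ρ ^ (-t) * ρ ^ (1:ℝ)) := by rw [Real.rpow_one]; ring
      _ = 6 * ρ ^ (1 - t) := by rw [← Real.rpow_add hρ0]; congr 2; ring
    have hterm1 : (m:ℝ) * δ ^ s ≤ 6 * δ ^ e1 + δ ^ s := by
      have h1 : (m:ℝ) * δ ^ s ≤ (X / δ + 1) * δ ^ s :=
        mul_le_mul_of_nonneg_right hm_le (by positivity)
      have h2 : (X / δ + 1) * δ ^ s = X * (δ ^ s / δ) + δ ^ s := by ring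
      have h3 : X * δ ^ (s - 1) ≤ 6 * ρ ^ (1 - t) * δ ^ (s - 1) :=
        mul_le_mul_of_nonneg_right hXbound (by positivity)
      have h4 : 6 * ρ ^ (1 - t) * δ ^ (s - 1) = 6 * δ ^ e1 := by
        rw [id1, mul_assoc, ← Real.rpow_add hδ, he1def]
        congr 2
        ring
      calc (m:ℝ) * δ ^ s ≤ X * (δ ^ s / δ) + δ ^ s := by linarith
      _ = X * δ ^ (s - 1) + δ ^ s := by rw [hpow1]
      _ ≤ 6 * δ ^ e1 + δ ^ s := by linarith
    have hterm2 : (n:ℝ) * η ^ s ≤ δ ^ e2 := by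
      have h1 : (n:ℝ) ≤ ρ ^ (-t) := le_trans (by exact_mod_cast hn_le_N) hNρ
      have h2 : (n:ℝ) * η ^ s ≤ ρ ^ (-t) * η ^ s :=
        mul_le_mul_of_nonneg_right h1 (by positivity)
      have h3 : ρ ^ (-t) * η ^ s = δ ^ e2 := by
        rw [id2, id5, ← Real.rpow_add hδ, he2def]
        congr 1
        field_simp
        ring
      linarith
    have hb1 : δ ^ e1 ≤ ε / 18 := by
      have h := Real.rpow_le_rpow hδ.le hδA he1.le
      rwa [← Real.rpow_mul (by positivity), one_div, inv_mul_cancel₀ (ne_of_gt he1),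
        Real.rpow_one] at h
    have hb2 : δ ^ s ≤ ε / 3 := by
      have h := Real.rpow_le_rpow hδ.le hδB hs.le
      rwa [← Real.rpow_mul (by positivity), one_div, inv_mul_cancel₀ (ne_of_gt hs),
        Real.rpow_one] at h
    have hb3 : δ ^ e2 ≤ ε / 3 := by
      have h := Real.rpow_le_rpow hδ.le hδC he2.le
      rwa [← Real.rpow_mul (by positivity), one_div, inv_mul_cancel₀ (ne_of_gt he2),
        Real.rpow_one] at h
    linarith

end UP

section LOW

variable {a : ℕ → ℝ}

lemma not_mem_coverSet (hpos : ∀ n ≥ 1, 0 < a n)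
    (hsumm : Summable fun n => a (n + 1)) (htot : ∑' n : ℕ, a (n + 1) = 1)
    {θ s t β : ℝ} (hθ0 : 0 < θ) (hs0 : 0 ≤ s) (hs1 : s ≤ 1) (hβ : 0 < β)
    (he1 : β * (1 - t) + s - 1 < 0) (he2 : s / θ - β * t < 0)
    (Hfreq : ∀ c > (0:ℝ), ∃ δ', 0 < δ' ∧ δ' ≤ c ∧ δ' ^ (-t) ≤ (coverNum (Da a) δ' : ℝ)) :
    ¬ (0 ≤ s ∧ ∀ ε > (0:ℝ), ∃ δ₀ > (0:ℝ), ∀ δ : ℝ, 0 < δ → δ ≤ δ₀ →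
      ∃ (I : Finset ℕ) (U : ℕ → Set ℝ), (Da a ⊆ ⋃ i ∈ I, U i) ∧
        (∀ i ∈ I, δ ^ (1 / θ) ≤ Metric.diam (U i) ∧ Metric.diam (U i) ≤ δ) ∧
        ∑ i ∈ I, Metric.diam (U i) ^ s ≤ ε) := by
  classical
  have hF := Da_subset hpos hsumm htot
  rintro ⟨-, h⟩
  obtain ⟨δ₀, hδ₀, h⟩ := h 1 one_pos
  set m1 := -(β * (1 - t) + s - 1) with hm1def
  set m2 := -(s / θ - β * t) with hm2def
  have hm1 : 0 < m1 := by rw [hm1def]; linarith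
  have hm2 : 0 < m2 := by rw [hm2def]; linarith
  set cbound := min δ₀ (min (1/2) (min ((1/4) ^ (1/m1)) ((1/4) ^ (1/m2)))) with hcdef
  have hcb : 0 < cbound := by
    apply lt_min hδ₀
    exact lt_min (by norm_num)
      (lt_min (Real.rpow_pos_of_pos (by norm_num) _) (Real.rpow_pos_of_pos (by norm_num) _))
  obtain ⟨δ', hδ'0, hδ'le, hδ'N⟩ := Hfreq (cbound ^ β) (Real.rpow_pos_of_pos hcb _)
  set δ := δ' ^ (1/β) with hδdef
  have hδ0 : 0 < δ := Real.rpow_pos_of_pos hδ'0 _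
  have hβne : β ≠ 0 := ne_of_gt hβ
  have hδδ' : δ ^ β = δ' := by
    rw [hδdef, ← Real.rpow_mul hδ'0.le, one_div, inv_mul_cancel₀ hβne, Real.rpow_one]
  have hδc : δ ≤ cbound := by
    calc δ = δ' ^ (1/β) := rfl
    _ ≤ (cbound ^ β) ^ (1/β) := Real.rpow_le_rpow hδ'0.le hδ'le (by positivity)
    _ = cbound := by
        rw [← Real.rpow_mul hcb.le, mul_one_div, div_self hβne, Real.rpow_one]
  have hδm1 : δ ≤ (1/4) ^ (1/m1) :=
    le_trans hδc (le_trans (min_le_right _ _) (le_trans (min_le_right _ _) (min_le_left _ _)))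
  have hδm2 : δ ≤ (1/4) ^ (1/m2) :=
    le_trans hδc (le_trans (min_le_right _ _) (le_trans (min_le_right _ _) (min_le_right _ _)))
  obtain ⟨I, U, hcov, hdiam, hsum⟩ := h δ hδ0 (le_trans hδc (min_le_left _ _))
  obtain ⟨P, hPF, hPsep, hPN⟩ := exists_separated hF hδ'0
  set η := δ ^ (1/θ) with hηdef
  have hη0 : 0 < η := Real.rpow_pos_of_pos hδ0 _
  have hUb : ∀ i ∈ I, Bornology.IsBounded (U i) := by
    intro i hi
    by_contra hub
    have hz := Metric.diam_eq_zero_of_unbounded hub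
    have h1 := (hdiam i hi).1
    rw [hz] at h1
    linarith
  have hcount : (P.card : ℝ) ≤ ∑ i ∈ I, (Metric.diam (U i) / δ' + 1) := by
    have hPsub : P ⊆ I.biUnion (fun i => P.filter (fun p => p ∈ U i)) := by
      intro p hp
      have hc := hcov (hPF hp)
      rw [mem_iUnion₂] at hc
      obtain ⟨i, hi, hpU⟩ := hc
      rw [Finset.mem_biUnion]
      exact ⟨i, hi, Finset.mem_filter.2 ⟨hp, hpU⟩⟩
    have h1 : P.card ≤ ∑ i ∈ I, (P.filter (fun p => p ∈ U i)).card :=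
      le_trans (Finset.card_le_card hPsub) Finset.card_biUnion_le
    have h2 : ∀ i ∈ I, ((P.filter (fun p => p ∈ U i)).card : ℝ) ≤
        Metric.diam (U i) / δ' + 1 := by
      intro i hi
      apply card_le_of_separated hδ'0 Metric.diam_nonneg
      · intro p hp q hq hpq
        exact hPsep p (Finset.mem_filter.1 hp).1 q (Finset.mem_filter.1 hq).1 hpq
      · intro p hp q hq
        rw [← Real.dist_eq]
        exact Metric.dist_le_diam_of_mem (hUb i hi) (Finset.mem_filter.1 hp).2
          (Finset.mem_filter.1 hq).2
    calc (P.card : ℝ) ≤ ((∑ i ∈ I, (P.filter (fun p => p ∈ U i)).card : ℕ) : ℝ) := by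
          exact_mod_cast h1
    _ ≤ ∑ i ∈ I, (Metric.diam (U i) / δ' + 1) := by
        push_cast
        exact Finset.sum_le_sum h2
  set kfac := δ ^ (1 - s) / δ' + δ ^ (-(s/θ)) with hkdef
  have hkfac0 : 0 ≤ kfac := by
    rw [hkdef]
    have := Real.rpow_nonneg hδ0.le (1 - s)
    have := Real.rpow_nonneg hδ0.le (-(s/θ))
    positivity
  have hterm : ∀ i ∈ I, Metric.diam (U i) / δ' + 1 ≤ kfac * Metric.diam (U i) ^ s := by
    intro i hi
    obtain ⟨hd1, hd2⟩ := hdiam i hi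
    have hdpos : 0 < Metric.diam (U i) := lt_of_lt_of_le hη0 hd1
    have hA : Metric.diam (U i) ≤ δ ^ (1 - s) * Metric.diam (U i) ^ s := by
      have hsplit : Metric.diam (U i) =
          Metric.diam (U i) ^ (1 - s) * Metric.diam (U i) ^ s := by
        rw [← Real.rpow_add hdpos]; norm_num
      calc Metric.diam (U i) = Metric.diam (U i) ^ (1 - s) * Metric.diam (U i) ^ s := hsplit
      _ ≤ δ ^ (1 - s) * Metric.diam (U i) ^ s :=
          mul_le_mul_of_nonneg_right
            (Real.rpow_le_rpow hdpos.le hd2 (by linarith)) (by positivity)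
    have hA' : Metric.diam (U i) / δ' ≤ δ ^ (1 - s) / δ' * Metric.diam (U i) ^ s := by
      rw [div_mul_eq_mul_div]
      exact (div_le_div_iff_of_pos_right hδ'0).2 hA
    have hB : (1:ℝ) ≤ δ ^ (-(s/θ)) * Metric.diam (U i) ^ s := by
      have h1 : δ ^ (s/θ) ≤ Metric.diam (U i) ^ s := by
        have hid : δ ^ (s/θ) = (δ ^ (1/θ)) ^ s := by
          rw [← Real.rpow_mul hδ0.le]; congr 1; field_simp
        rw [hid]
        exact Real.rpow_le_rpow (by positivity) hd1 hs0
      have h2 : δ ^ (-(s/θ)) * δ ^ (s/θ) = 1 := by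
        rw [← Real.rpow_add hδ0]; norm_num
      calc (1:ℝ) = δ ^ (-(s/θ)) * δ ^ (s/θ) := h2.symm
      _ ≤ δ ^ (-(s/θ)) * Metric.diam (U i) ^ s :=
          mul_le_mul_of_nonneg_left h1 (by positivity)
    calc Metric.diam (U i) / δ' + 1
        ≤ δ ^ (1 - s) / δ' * Metric.diam (U i) ^ s
          + δ ^ (-(s/θ)) * Metric.diam (U i) ^ s := add_le_add hA' hB
    _ = kfac * Metric.diam (U i) ^ s := by rw [hkdef]; ring
  have hsum2 : (P.card : ℝ) ≤ kfac := by
    calc (P.card : ℝ) ≤ ∑ i ∈ I, (Metric.diam (U i) / δ' + 1) := hcount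
    _ ≤ ∑ i ∈ I, kfac * Metric.diam (U i) ^ s := Finset.sum_le_sum hterm
    _ = kfac * ∑ i ∈ I, Metric.diam (U i) ^ s := by rw [Finset.mul_sum]
    _ ≤ kfac * 1 := mul_le_mul_of_nonneg_left hsum hkfac0
    _ = kfac := mul_one _
  have hPN' : δ ^ (-(β * t)) ≤ (P.card : ℝ) := by
    have hid : δ' ^ (-t) = δ ^ (-(β * t)) := by
      rw [← hδδ', ← Real.rpow_mul hδ0.le]
      congr 1; ring
    rw [← hid]
    exact le_trans hδ'N (by exact_mod_cast hPN)
  have hδ'inv : δ ^ (1 - s) / δ' = δ ^ (1 - s - β) := by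
    rw [← hδδ', ← Real.rpow_sub hδ0]
  have hkey2 : δ ^ (-(β * t)) ≤ δ ^ (1 - s - β) + δ ^ (-(s/θ)) := by
    rw [← hδ'inv]
    calc δ ^ (-(β * t)) ≤ (P.card : ℝ) := hPN'
    _ ≤ kfac := hsum2
    _ = δ ^ (1 - s) / δ' + δ ^ (-(s/θ)) := hkdef
  have h1 : δ ^ (-(β * t)) * δ ^ (β * t) = 1 := by
    rw [← Real.rpow_add hδ0]; norm_num
  have h2 : δ ^ (1 - s - β) * δ ^ (β * t) = δ ^ m1 := by
    rw [← Real.rpow_add hδ0, hm1def]; congr 1; ring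
  have h3 : δ ^ (-(s/θ)) * δ ^ (β * t) = δ ^ m2 := by
    rw [← Real.rpow_add hδ0, hm2def]; congr 1; ring
  have hfin : (1:ℝ) ≤ δ ^ m1 + δ ^ m2 := by
    have hmul := mul_le_mul_of_nonneg_right hkey2 (Real.rpow_nonneg hδ0.le (β * t))
    calc (1:ℝ) = δ ^ (-(β * t)) * δ ^ (β * t) := h1.symm
    _ ≤ (δ ^ (1 - s - β) + δ ^ (-(s/θ))) * δ ^ (β * t) := hmul
    _ = δ ^ m1 + δ ^ m2 := by rw [add_mul, h2, h3]
  have hq1 : δ ^ m1 ≤ 1/4 := by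
    have hr : ((1/4:ℝ) ^ (1/m1)) ^ m1 = 1/4 := by
      rw [← Real.rpow_mul (by norm_num : (0:ℝ) ≤ 1/4), one_div m1,
        inv_mul_cancel₀ (ne_of_gt hm1), Real.rpow_one]
    have hq := Real.rpow_le_rpow hδ0.le hδm1 hm1.le
    rwa [hr] at hq
  have hq2 : δ ^ m2 ≤ 1/4 := by
    have hr : ((1/4:ℝ) ^ (1/m2)) ^ m2 = 1/4 := by
      rw [← Real.rpow_mul (by norm_num : (0:ℝ) ≤ 1/4), one_div m2,
        inv_mul_cancel₀ (ne_of_gt hm2), Real.rpow_one]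
    have hq := Real.rpow_le_rpow hδ0.le hδm2 hm2.le
    rwa [hr] at hq
  linarith

end LOW

section Algebra

lemma gfun_lt {θ t1 t2 : ℝ} (hθ0 : 0 < θ) (hθ1 : θ ≤ 1) (ht1 : 0 ≤ t1) (h12 : t1 < t2)
    (ht2 : t2 ≤ 1) :
    θ * t1 / (1 - (1 - θ) * t1) < θ * t2 / (1 - (1 - θ) * t2) := by
  have hb1 : (1 - θ) * t1 ≤ 1 - θ := mul_le_of_le_one_right (by linarith) (by linarith)
  have hb2 : (1 - θ) * t2 ≤ 1 - θ := mul_le_of_le_one_right (by linarith) ht2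
  have hd1 : 0 < 1 - (1 - θ) * t1 := by linarith
  have hd2 : 0 < 1 - (1 - θ) * t2 := by linarith
  rw [div_lt_div_iff₀ hd1 hd2]
  nlinarith [mul_pos hθ0 (sub_pos.2 h12)]

lemma gfun_le {θ t1 t2 : ℝ} (hθ0 : 0 < θ) (hθ1 : θ ≤ 1) (ht1 : 0 ≤ t1) (h12 : t1 ≤ t2)
    (ht2 : t2 ≤ 1) :
    θ * t1 / (1 - (1 - θ) * t1) ≤ θ * t2 / (1 - (1 - θ) * t2) := by
  rcases eq_or_lt_of_le h12 with rfl | h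
  · exact le_rfl
  · exact (gfun_lt hθ0 hθ1 ht1 h ht2).le

lemma gfun_inv {θ s : ℝ} (hθ0 : 0 < θ) (hθ1 : θ ≤ 1) (hs0 : 0 ≤ s) :
    θ * (s / (θ + (1 - θ) * s)) / (1 - (1 - θ) * (s / (θ + (1 - θ) * s))) = s := by
  have hden : 0 < θ + (1 - θ) * s := by nlinarith
  have h1 : 1 - (1 - θ) * (s / (θ + (1 - θ) * s)) = θ / (θ + (1 - θ) * s) := by
    field_simp
    ring
  rw [h1]
  field_simp
  rw [mul_div_assoc, div_self (ne_of_gt (by nlinarith)), mul_one]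

end Algebra


set_option maxHeartbeats 2000000 in
/-- `\overline{dim}_θ D_a = θB / (1 - (1-θ)B)` where `B` is the upper box dimension
of `D_a`. -/
theorem upperIntDim_Da (a : ℕ → ℝ) (hpos : ∀ n ≥ 1, 0 < a n) (hmono : ∀ n ≥ 1, a (n + 1) ≤ a n)
    (hsumm : Summable fun n => a (n + 1)) (htot : ∑' n : ℕ, a (n + 1) = 1) :
    ∀ θ ∈ Set.Icc (0:ℝ) 1,
      upperIntDim θ (Da a) =
        θ * upperBoxDim (Da a) / (1 - (1 - θ) * upperBoxDim (Da a)) := by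
  intro θ hθmem
  obtain ⟨hθ0, hθ1⟩ := hθmem
  have hF := Da_subset hpos hsumm htot
  have hne : (Da a).Nonempty := ⟨0, zero_mem_Da⟩
  rcases eq_or_lt_of_le hθ0 with hθz | hθpos
  · subst hθz
    rw [upperIntDim, if_pos rfl, dimH_countable Da_countable]
    simp
  · have hθne : θ ≠ 0 := ne_of_gt hθpos
    set SS : Set ℝ := {s : ℝ | 0 ≤ s ∧ ∀ ε > (0:ℝ), ∃ δ₀ > (0:ℝ), ∀ δ : ℝ, 0 < δ → δ ≤ δ₀ →
      ∃ (I : Finset ℕ) (U : ℕ → Set ℝ), (Da a ⊆ ⋃ i ∈ I, U i) ∧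
        (∀ i ∈ I, δ ^ (1 / θ) ≤ Metric.diam (U i) ∧ Metric.diam (U i) ≤ δ) ∧
        ∑ i ∈ I, Metric.diam (U i) ^ s ≤ ε} with hSSdef
    have hgoal : upperIntDim θ (Da a) = sInf SS := by
      rw [upperIntDim, if_neg hθne]
    rw [hgoal]
    set B := upperBoxDim (Da a) with hBdef
    have hB0 : 0 ≤ B := upperBoxDim_nonneg hF hne
    have hB1 : B ≤ 1 := upperBoxDim_le_one hF hne
    have hbB : (1 - θ) * B ≤ 1 - θ := mul_le_of_le_one_right (by linarith) hB1
    have hdenB : 0 < 1 - (1 - θ) * B := by linarith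
    set R := θ * B / (1 - (1 - θ) * B) with hRdef
    have hR0 : 0 ≤ R := div_nonneg (by positivity) hdenB.le
    have hR1 : R ≤ 1 := by
      rw [hRdef, div_le_one hdenB]
      nlinarith
    have h2mem : (2:ℝ) ∈ SS := by
      apply mem_coverSet hpos hmono hsumm htot hθpos hθ1 two_pos (t := 1) (β := 1/(2*θ))
        (by positivity) ?_ ?_ (ev_N_le_rpow hF le_rfl)
      · norm_num
      · have h : (2:ℝ)/θ - 1/(2*θ)*1 = 3/(2*θ) := by
          field_simp
          ring
        rw [h]
        positivity
    have hSne : SS.Nonempty := ⟨2, h2mem⟩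
    have hSbdd : BddBelow SS := ⟨0, fun x hx => hx.1⟩
    apply le_antisymm
    · rw [Real.sInf_le_iff hSbdd hSne]
      intro ε hε
      by_cases hB1' : B = 1
      · have hReq : R = 1 := by
          rw [hRdef, hB1']
          field_simp
          rw [sub_sub_cancel, div_self hθne]
        refine ⟨1 + ε/2, ?_, by rw [hReq]; linarith⟩
        apply mem_coverSet hpos hmono hsumm htot hθpos hθ1 (by linarith) (t := 1)
          (β := (1 + ε/2)/(2*θ)) (by positivity) ?_ ?_ (ev_N_le_rpow hF le_rfl)
        · have h : (1 + ε/2)/(2*θ) * ((1:ℝ) - 1) + (1 + ε/2) - 1 = ε/2 := by ring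
          rw [h]
          linarith
        · have h : (1 + ε/2)/θ - (1 + ε/2)/(2*θ)*1 = (1 + ε/2)/(2*θ) := by
            field_simp
            ring
          rw [h]
          positivity
      · have hBlt : B < 1 := lt_of_le_of_ne hB1 hB1'
        have hg1 : θ * 1 / (1 - (1 - θ) * 1) = 1 := by
          field_simp
          rw [sub_sub_cancel, div_self hθne]
        have hRlt : R < 1 := by
          have h := gfun_lt hθpos hθ1 hB0 hBlt le_rfl
          rw [hg1] at h
          exact h
        set s := min (R + ε/2) ((R+1)/2) with hsdef
        have hsR : R < s := lt_min (by linarith) (by linarith)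
        have hs1 : s < 1 := lt_of_le_of_lt (min_le_right _ _) (by linarith)
        have hs0 : 0 < s := lt_of_le_of_lt hR0 hsR
        set tt := s / (θ + (1 - θ) * s) with httdef
        have hdent : 0 < θ + (1 - θ) * s := by nlinarith
        have hgtt : θ * tt / (1 - (1 - θ) * tt) = s := gfun_inv hθpos hθ1 hs0.le
        have htt1 : tt < 1 := by
          rw [httdef, div_lt_one hdent]
          nlinarith
        have htt0 : 0 < tt := by
          rw [httdef]
          positivity
        have hBtt : B < tt := by
          by_contra hle
          push_neg at hle
          have h := gfun_le hθpos hθ1 htt0.le hle hB1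
          rw [hgtt] at h
          linarith
        set t := (B + tt)/2 with htdef
        have htB : B < t := by rw [htdef]; linarith
        have httlt : t < tt := by rw [htdef]; linarith
        have ht1 : t < 1 := by linarith
        have ht0 : 0 < t := by linarith
        have hgt : θ * t / (1 - (1 - θ) * t) < s := by
          have h := gfun_lt hθpos hθ1 (by linarith) httlt htt1.le
          rw [hgtt] at h
          exact h
        have hbt : (1 - θ) * t ≤ 1 - θ := mul_le_of_le_one_right (by linarith) ht1.le
        have hdent2 : 0 < 1 - (1 - θ) * t := by linarith
        have hgt' : θ * t < s * (1 - (1 - θ) * t) := by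
          rw [div_lt_iff₀ hdent2] at hgt
          exact hgt
        have hord : (1 - s)/(1 - t) < s/(θ*t) := by
          rw [div_lt_div_iff₀ (by linarith) (by positivity)]
          nlinarith
        set β := ((1 - s)/(1 - t) + s/(θ*t))/2 with hβdef
        have hβl : (1 - s)/(1 - t) < β := by rw [hβdef]; linarith
        have hβr : β < s/(θ*t) := by rw [hβdef]; linarith
        have hβ0 : 0 < β := by
          have h1 : (0:ℝ) ≤ (1-s)/(1-t) := div_nonneg (by linarith) (by linarith)
          linarith
        have hβlt : 1 - s < β * (1 - t) := (div_lt_iff₀ (by linarith : (0:ℝ) < 1 - t)).1 hβl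
        have hβgt : β * (θ*t) < s := (lt_div_iff₀ (by positivity)).1 hβr
        have hsbound : s < R + ε := lt_of_le_of_lt (min_le_left _ _) (by linarith)
        clear_value s tt t β
        refine ⟨s, ?_, hsbound⟩
        apply mem_coverSet hpos hmono hsumm htot hθpos hθ1 hs0 hβ0 ?_ ?_
          (ev_N_le_of_lt hF hne htB)
        · linarith
        · rw [sub_pos, lt_div_iff₀ hθpos]
          nlinarith
    · apply le_csInf hSne
      intro s' hs'
      by_contra hlt
      push_neg at hlt
      obtain ⟨hs'0, -⟩ := id hs'
      have hs'1 : s' < 1 := lt_of_lt_of_le hlt hR1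
      have hBpos : 0 < B := by
        by_contra hB
        push_neg at hB
        have hRle : R ≤ 0 := by
          rw [hRdef]
          apply div_nonpos_of_nonpos_of_nonneg ?_ hdenB.le
          exact mul_nonpos_of_nonneg_of_nonpos hθpos.le hB
        linarith
      set tt := s' / (θ + (1 - θ) * s') with httdef
      have hdent : 0 < θ + (1 - θ) * s' := by nlinarith
      have hgtt : θ * tt / (1 - (1 - θ) * tt) = s' := gfun_inv hθpos hθ1 hs'0
      have htt0 : 0 ≤ tt := by rw [httdef]; positivity
      have htt1 : tt < 1 := by
        rw [httdef, div_lt_one hdent]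
        nlinarith
      have httB : tt < B := by
        by_contra hle
        push_neg at hle
        have h := gfun_le hθpos hθ1 hB0 hle htt1.le
        rw [hgtt] at h
        linarith
      set t := (tt + B)/2 with htdef
      have ht0 : 0 < t := by rw [htdef]; linarith
      have htB : t < B := by rw [htdef]; linarith
      have ht1 : t < 1 := by linarith
      have hgt : s' < θ * t / (1 - (1 - θ) * t) := by
        have h := gfun_lt hθpos hθ1 htt0 (by rw [htdef]; linarith) ht1.le
        rw [hgtt] at h
        exact h
      have hbt : (1 - θ) * t ≤ 1 - θ := mul_le_of_le_one_right (by linarith) ht1.le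
      have hdent2 : 0 < 1 - (1 - θ) * t := by linarith
      have hgt' : s' * (1 - (1 - θ) * t) < θ * t := by
        rw [lt_div_iff₀ hdent2] at hgt
        exact hgt
      have hord : s'/(θ*t) < (1 - s')/(1 - t) := by
        rw [div_lt_div_iff₀ (by positivity) (by linarith)]
        nlinarith
      set β := (s'/(θ*t) + (1 - s')/(1 - t))/2 with hβdef
      have hβl : s'/(θ*t) < β := by rw [hβdef]; linarith
      have hβr : β < (1 - s')/(1 - t) := by rw [hβdef]; linarith
      have hβ0 : 0 < β := by
        have h1 : (0:ℝ) ≤ s'/(θ*t) := div_nonneg hs'0 (by positivity)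
        have h2 : (0:ℝ) < (1 - s')/(1 - t) := div_pos (by linarith) (by linarith)
        linarith
      have hβlt : s' < β * (θ*t) := (div_lt_iff₀ (by positivity)).1 hβl
      have hβgt : β * (1 - t) < 1 - s' := (lt_div_iff₀ (by linarith : (0:ℝ) < 1 - t)).1 hβr
      clear_value tt t β
      refine absurd hs' (not_mem_coverSet hpos hsumm htot hθpos hs'0 hs'1.le hβ0 ?_ ?_
        (freq_N_ge_of_lt hF hne htB))
      · linarith
      · rw [sub_neg, div_lt_iff₀ hθpos]
        nlinarith
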